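/- Let Ω ⊂ ℝⁿ (n ≥ 2) be a uniformly C² domain, v ∈ bmo_∞^∞(Ω), v₁ = θ_ρ v, v₂ := v − v₁ (so supp v₂ ⊂ Ω \ Γ_ρ), and ρ < c_Ω^ε/32. Then the zero extension v₂^{ze} of v₂ to ℝⁿ belongs to bmo(ℝⁿ) and satisfies ‖v₂^{ze}‖_{bmo(ℝⁿ)} ≤ (C/ρⁿ) ‖v‖_{bmo_∞^∞(Ω)} with C independent of v and ρ. -/

import Mathlib

open MeasureTheory Metric Set Function
open scoped ENNReal Pointwise NNReal

noncomputable section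
attribute [local instance] Classical.propDecidable

/-- Euclidean space `ℝⁿ`. -/
abbrev Euc (n : ℕ) := EuclideanSpace ℝ (Fin n)

/-- Euclidean space `ℝ^{n-1}` of tangential coordinates `x'`. -/
abbrev Euc' (n : ℕ) := EuclideanSpace ℝ (Fin (n - 1))

/-- The model space `ℝ^{n-1} × ℝ` with the Euclidean (`L²`) norm. -/
abbrev Model (n : ℕ) := WithLp 2 (Euc' n × ℝ)

/-- Tangential component `p'` of a model point. -/
def mFst {n : ℕ} (p : Model n) : Euc' n := (WithLp.equiv 2 (Euc' n × ℝ) p).1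

/-- Vertical component `pₙ` of a model point. -/
def mSnd {n : ℕ} (p : Model n) : ℝ := (WithLp.equiv 2 (Euc' n × ℝ) p).2

/-- Build a model point from components. -/
def mMk {n : ℕ} (x' : Euc' n) (t : ℝ) : Model n := (WithLp.equiv 2 (Euc' n × ℝ)).symm (x', t)

/-- Signed distance to the boundary of `Ω` (positive inside `Ω`). -/
def sdist {n : ℕ} (Ω : Set (Euc n)) (x : Euc n) : ℝ :=
  if x ∈ Ω then infDist x (frontier Ω) else -infDist x (frontier Ω)

/-- The average of `f` over the closed ball `B_r(x)`. -/
def ballAvg {n : ℕ} (f : Euc n → ℝ) (x : Euc n) (r : ℝ) : ℝ := ⨍ y in closedBall x r, f y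

/-- The mean oscillation of `f` over the closed ball `B_r(x)`. -/
def meanOsc {n : ℕ} (f : Euc n → ℝ) (x : Euc n) (r : ℝ) : ℝ :=
  ⨍ y in closedBall x r, |f y - ballAvg f x r|

/-- All mean oscillations of `f` over closed balls `B_r(x) ⊆ U` with `r < μ`. -/
def oscSet {n : ℕ} (f : Euc n → ℝ) (U : Set (Euc n)) (μ : ℝ≥0∞) : Set ℝ :=
  {a | ∃ (x : Euc n) (r : ℝ), 0 < r ∧ ENNReal.ofReal r < μ ∧ closedBall x r ⊆ U ∧
        a = meanOsc f x r}

/-- The `BMO^μ(U)` seminorm. -/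
def bmoSemi {n : ℕ} (f : Euc n → ℝ) (U : Set (Euc n)) (μ : ℝ≥0∞) : ℝ := sSup (oscSet f U μ)

/-- `f ∈ BMO^μ(U)`. -/
def MemBMO {n : ℕ} (f : Euc n → ℝ) (U : Set (Euc n)) (μ : ℝ≥0∞) : Prop :=
  (∀ (x : Euc n) (r : ℝ), closedBall x r ⊆ U → IntegrableOn f (closedBall x r)) ∧
    BddAbove (oscSet f U μ)

/-- The family of integrals `∫_{B_1(x) ∩ D} |f|`. -/
def l1Set {n : ℕ} (f : Euc n → ℝ) (Dm : Set (Euc n)) : Set ℝ :=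
  range fun x : Euc n => ∫ y in closedBall x 1 ∩ Dm, |f y|

/-- The uniformly-local `L¹` norm `‖f‖_{L¹_ul(D)}`. -/
def l1ul {n : ℕ} (f : Euc n → ℝ) (Dm : Set (Euc n)) : ℝ := sSup (l1Set f Dm)

/-- `f ∈ L¹_ul(D)`. -/
def MemL1ul {n : ℕ} (f : Euc n → ℝ) (Dm : Set (Euc n)) : Prop :=
  (∀ x : Euc n, IntegrableOn f (closedBall x 1 ∩ Dm)) ∧ BddAbove (l1Set f Dm)

/-- The `bmo_∞^∞(U)` norm `[f]_{BMO^∞(U)} + ‖f‖_{L¹_ul(U)}`. -/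
def bmoNorm {n : ℕ} (f : Euc n → ℝ) (U : Set (Euc n)) : ℝ := bmoSemi f U ⊤ + l1ul f U

/-- `f ∈ bmo_∞^∞(U) = BMO^∞(U) ∩ L¹_ul(U)`. -/
def MemBmo {n : ℕ} (f : Euc n → ℝ) (U : Set (Euc n)) : Prop := MemBMO f U ⊤ ∧ MemL1ul f U

/-- Hölder quotients and values of `φ` on `U` (whose sup is the `C^γ(U)` norm). -/
def holderSet {n : ℕ} (γ : ℝ) (φ : Euc n → ℝ) (U : Set (Euc n)) : Set ℝ :=
  {a | ∃ x ∈ U, a = |φ x|} ∪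
    {a | ∃ x ∈ U, ∃ y ∈ U, x ≠ y ∧ a = |φ x - φ y| / dist x y ^ γ}

/-- The Hölder norm `‖φ‖_{C^γ(U)}`. -/
def holderNorm {n : ℕ} (γ : ℝ) (φ : Euc n → ℝ) (U : Set (Euc n)) : ℝ := sSup (holderSet γ φ U)

/-- `φ ∈ C^γ(U)`. -/
def MemHolderOn {n : ℕ} (γ : ℝ) (φ : Euc n → ℝ) (U : Set (Euc n)) : Prop :=
  BddAbove (holderSet γ φ U)

/-- The quantities `r^{-n} ∫_{B_r(x) ∩ dom} |f|`, for `x ∈ ∂Ω`, `0 < r < ν`. -/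
def bSet {n : ℕ} (Ω dom : Set (Euc n)) (f : Euc n → ℝ) (ν : ℝ≥0∞) : Set ℝ :=
  {a | ∃ x ∈ frontier Ω, ∃ r : ℝ, 0 < r ∧ ENNReal.ofReal r < ν ∧
        a = (∫ y in closedBall x r ∩ dom, |f y|) / r ^ n}

/-- The seminorm `[f]_{b^ν}` controlling boundary behaviour. -/
def bSemi {n : ℕ} (Ω dom : Set (Euc n)) (f : Euc n → ℝ) (ν : ℝ≥0∞) : ℝ := sSup (bSet Ω dom f ν)

/-- `[f]_{b^ν} < ∞` (together with the relevant local integrability). -/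
def MemB {n : ℕ} (Ω dom : Set (Euc n)) (f : Euc n → ℝ) (ν : ℝ≥0∞) : Prop :=
  (∀ (x : Euc n) (r : ℝ), IntegrableOn f (closedBall x r ∩ dom)) ∧ BddAbove (bSet Ω dom f ν)

/-- One-sided neighbourhood `Γ_δ = {x ∈ Ω : d(x) < δ}` of the boundary. -/
def innerNbhd {n : ℕ} (Ω : Set (Euc n)) (δ : ℝ) : Set (Euc n) := {x | x ∈ Ω ∧ sdist Ω x < δ}

/-- Two-sided neighbourhood `Γ^δ = {x : |d(x)| < δ}` of the boundary. -/
def tubNbhd {n : ℕ} (Ω : Set (Euc n)) (δ : ℝ) : Set (Euc n) := {x | |sdist Ω x| < δ}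

/-- The cylinder `V_ρ = B_ρ(0') × (-ρ, ρ)` in the model space. -/
def vSet (n : ℕ) (ρ : ℝ) : Set (Model n) := {p | ‖mFst p‖ < ρ ∧ |mSnd p| < ρ}

/-- A smooth cutoff `θ` with `θ = 1` on `[-1,1]`, `θ = 0` off `(-2,2)`, `0 ≤ θ ≤ 1`. -/
def IsCutoff (θ : ℝ → ℝ) : Prop :=
  ContDiff ℝ (⊤ : ℕ∞) θ ∧ HasCompactSupport θ ∧ (∀ t, 0 ≤ θ t ∧ θ t ≤ 1) ∧
    (∀ t, |t| ≤ 1 → θ t = 1) ∧ (∀ t, 2 ≤ |t| → θ t = 0)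

/-- Data witnessing that `Ω ⊆ ℝⁿ` is a uniformly `C²` domain of type `(r*, δ*, L_Γ)`,
together with a tubular neighbourhood of width `ρ₀` of the boundary on which the
nearest-point projection onto `∂Ω` is well defined and unique. -/
structure UnifC2Data (n : ℕ) (Ω : Set (Euc n)) where
  isOpen : IsOpen Ω
  conn : IsConnected Ω
  rStar : ℝ
  δStar : ℝ
  LΓ : ℝ
  rStar_pos : 0 < rStar
  δStar_pos : 0 < δStar
  LΓ_pos : 0 < LΓ
  /-- the rotation of the local graph chart at a boundary point -/
  rot : Euc n → Model n ≃ₗᵢ[ℝ] Euc n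
  /-- the local graph function `ψ_{w₀}` at a boundary point -/
  ψ : Euc n → Euc' n → ℝ
  ψ_zero : ∀ w ∈ frontier Ω, ψ w 0 = 0
  dψ_zero : ∀ w ∈ frontier Ω, fderiv ℝ (ψ w) 0 = 0
  ψ_C2 : ∀ w ∈ frontier Ω, ContDiffOn ℝ 2 (ψ w) (ball (0 : Euc' n) rStar)
  ψ_bdd : ∀ w ∈ frontier Ω, ∀ x' ∈ ball (0 : Euc' n) rStar,
    |ψ w x'| ≤ LΓ ∧ ‖fderiv ℝ (ψ w) x'‖ ≤ LΓ ∧ ‖fderiv ℝ (fderiv ℝ (ψ w)) x'‖ ≤ LΓ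
  mem_iff : ∀ w ∈ frontier Ω, ∀ p : Model n, ‖mFst p‖ < rStar →
    |mSnd p - ψ w (mFst p)| < δStar → (w + rot w p ∈ Ω ↔ ψ w (mFst p) < mSnd p)
  frontier_iff : ∀ w ∈ frontier Ω, ∀ p : Model n, ‖mFst p‖ < rStar →
    |mSnd p - ψ w (mFst p)| < δStar → (w + rot w p ∈ frontier Ω ↔ mSnd p = ψ w (mFst p))
  /-- a radius `ρ₀` smaller than `r*`, `δ*`, `1` and the reach of the boundary -/
  ρ₀ : ℝ
  ρ₀_pos : 0 < ρ₀
  ρ₀_lt : ρ₀ < min rStar (min δStar 1)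
  /-- the nearest-point projection `π` onto the boundary -/
  proj : Euc n → Euc n
  proj_mem : ∀ x : Euc n, |sdist Ω x| < ρ₀ → proj x ∈ frontier Ω
  proj_dist : ∀ x : Euc n, |sdist Ω x| < ρ₀ → dist x (proj x) = |sdist Ω x|
  proj_unique : ∀ x : Euc n, |sdist Ω x| < ρ₀ →
    ∀ y ∈ frontier Ω, dist x y = |sdist Ω x| → y = proj x

namespace UnifC2Data

variable {n : ℕ} {Ω : Set (Euc n)} (D : UnifC2Data n Ω)

/-- The graph neighbourhood `U_{r*,δ*,ψ_{w₀}}(w₀)`. -/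
def bigNbhd (w : Euc n) : Set (Euc n) :=
  {x | ∃ p : Model n, ‖mFst p‖ < D.rStar ∧ |mSnd p - D.ψ w (mFst p)| < D.δStar ∧
        x = w + D.rot w p}

/-- Chart coordinates of `x` in the chart centred at `w`. -/
def coords (w : Euc n) (x : Euc n) : Model n := (D.rot w).symm (x - w)

/-- The normal-coordinate neighbourhood `U_ρ(w₀)`. -/
def uNbhd (w : Euc n) (ρ : ℝ) : Set (Euc n) :=
  {x | x ∈ D.bigNbhd w ∧ ‖mFst (D.coords w (D.proj x))‖ < ρ ∧ |sdist Ω x| < ρ}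

/-- The boundary point over `x'` in the chart at `w`. -/
def bpt (w : Euc n) (x' : Euc' n) : Euc n := w + D.rot w (mMk x' (D.ψ w x'))

/-- The inward unit normal at the boundary point over `x'`, i.e. `∇d` there. -/
def inNormal (w : Euc n) (x' : Euc' n) : Euc n :=
  (Real.sqrt (1 + ‖gradient (D.ψ w) x'‖ ^ 2))⁻¹ •
    D.rot w (mMk (-(gradient (D.ψ w) x')) 1)

/-- The normal coordinate map `F(η) = (η', ψ(η')) + ηₙ ∇d(η', ψ(η'))`. -/
def nCoord (w : Euc n) (η : Model n) : Euc n :=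
  D.bpt w (mFst η) + mSnd η • D.inNormal w (mFst η)

/-- The normal coordinate map read in the chart coordinates at `w`. -/
def nCoordC (w : Euc n) (η : Model n) : Model n := D.coords w (D.nCoord w η)

/-- The inverse `F⁻¹` of the normal coordinate map, in chart coordinates. -/
def nCoordCInv (w : Euc n) : Model n → Model n :=
  haveI : Nonempty (Model n) := ⟨0⟩
  Function.invFun (D.nCoordC w)

/-- Reflection across the boundary: `x ↦ 2πx − x`. -/
def reflect (x : Euc n) : Euc n := (2 : ℝ) • D.proj x - x

/-- Even extension with respect to `Γ` of a function defined (essentially) on `Ω`. -/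
def evenExt (f : Euc n → ℝ) (x : Euc n) : ℝ :=
  if x ∈ closure Ω then f x else if |sdist Ω x| < D.ρ₀ then f (D.reflect x) else 0

/-- Even extension with respect to `Γ` of a vector field defined on `Ω`. -/
def evenExtV (u : Euc n → Euc n) (x : Euc n) : Euc n :=
  if x ∈ closure Ω then u x else if |sdist Ω x| < D.ρ₀ then u (D.reflect x) else 0

/-- Odd extension with respect to `Γ` of a vector field defined on `Ω`. -/
def oddExtV (u : Euc n → Euc n) (x : Euc n) : Euc n :=
  if x ∈ closure Ω then u x else if |sdist Ω x| < D.ρ₀ then -u (D.reflect x) else 0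

end UnifC2Data

/-- Vector-valued analogue: average over a ball. -/
def ballAvgV {n : ℕ} (u : Euc n → Euc n) (x : Euc n) (r : ℝ) : Euc n := ⨍ y in closedBall x r, u y

/-- Vector-valued mean oscillation. -/
def meanOscV {n : ℕ} (u : Euc n → Euc n) (x : Euc n) (r : ℝ) : ℝ :=
  ⨍ y in closedBall x r, ‖u y - ballAvgV u x r‖

/-- Vector-valued oscillation family. -/
def oscSetV {n : ℕ} (u : Euc n → Euc n) (U : Set (Euc n)) (μ : ℝ≥0∞) : Set ℝ :=
  {a | ∃ (x : Euc n) (r : ℝ), 0 < r ∧ ENNReal.ofReal r < μ ∧ closedBall x r ⊆ U ∧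
        a = meanOscV u x r}

/-- Vector-valued `BMO^μ` seminorm. -/
def bmoSemiV {n : ℕ} (u : Euc n → Euc n) (U : Set (Euc n)) (μ : ℝ≥0∞) : ℝ := sSup (oscSetV u U μ)

/-- Vector-valued `u ∈ BMO^μ(U)`. -/
def MemBMOV {n : ℕ} (u : Euc n → Euc n) (U : Set (Euc n)) (μ : ℝ≥0∞) : Prop :=
  (∀ (x : Euc n) (r : ℝ), closedBall x r ⊆ U → IntegrableOn u (closedBall x r)) ∧
    BddAbove (oscSetV u U μ)

/-- Vector-valued uniformly-local `L¹` family. -/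
def l1SetV {n : ℕ} (u : Euc n → Euc n) (Dm : Set (Euc n)) : Set ℝ :=
  range fun x : Euc n => ∫ y in closedBall x 1 ∩ Dm, ‖u y‖

/-- Vector-valued uniformly-local `L¹` norm. -/
def l1ulV {n : ℕ} (u : Euc n → Euc n) (Dm : Set (Euc n)) : ℝ := sSup (l1SetV u Dm)

/-- Vector-valued `u ∈ L¹_ul(D)`. -/
def MemL1ulV {n : ℕ} (u : Euc n → Euc n) (Dm : Set (Euc n)) : Prop :=
  (∀ x : Euc n, IntegrableOn u (closedBall x 1 ∩ Dm)) ∧ BddAbove (l1SetV u Dm)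

/-- Vector-valued `bmo` norm. -/
def bmoNormV {n : ℕ} (u : Euc n → Euc n) (U : Set (Euc n)) : ℝ := bmoSemiV u U ⊤ + l1ulV u U

/-- Vector-valued `u ∈ bmo(U)`. -/
def MemBmoV {n : ℕ} (u : Euc n → Euc n) (U : Set (Euc n)) : Prop :=
  MemBMOV u U ⊤ ∧ MemL1ulV u U

/-- `∇d`, the gradient of the signed distance. -/
def gradd {n : ℕ} (Ω : Set (Euc n)) (x : Euc n) : Euc n := gradient (sdist Ω) x

/-- Normal part `P u = (∇d ⋅ u) ∇d` of a vector field. -/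
def normalPart {n : ℕ} (Ω : Set (Euc n)) (u : Euc n → Euc n) (x : Euc n) : Euc n :=
  (inner ℝ (gradd Ω x) (u x) : ℝ) • gradd Ω x

/-- Tangential part `Q u = u − (∇d ⋅ u) ∇d` of a vector field. -/
def tangentPart {n : ℕ} (Ω : Set (Euc n)) (u : Euc n → Euc n) (x : Euc n) : Euc n :=
  u x - normalPart Ω u x

/-- `u ∈ vbmo(Ω)`. -/
def MemVbmo {n : ℕ} (Ω : Set (Euc n)) (u : Euc n → Euc n) : Prop :=
  MemBmoV u Ω ∧ MemB Ω Ω (fun x => (inner ℝ (gradd Ω x) (u x) : ℝ)) ⊤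

/-- The `vbmo(Ω)` norm. -/
def vbmoNorm {n : ℕ} (Ω : Set (Euc n)) (u : Euc n → Euc n) : ℝ :=
  bmoNormV u Ω + bSemi Ω Ω (fun x => (inner ℝ (gradd Ω x) (u x) : ℝ)) ⊤

/-- A bounded Lipschitz domain with Lipschitz constant `L`. -/
def IsLipschitzDomain {n : ℕ} (L : ℝ) (Wd : Set (Euc n)) : Prop :=
  IsOpen Wd ∧ Bornology.IsBounded Wd ∧
    ∃ r : ℝ, 0 < r ∧ ∀ z ∈ frontier Wd,
      ∃ (A : Model n ≃ₗᵢ[ℝ] Euc n) (h : Euc' n → ℝ),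
        LipschitzWith (Real.toNNReal L) h ∧ h 0 = 0 ∧
          ∀ p : Model n, ‖p‖ < r →
            ((z + A p ∈ Wd ↔ h (mFst p) < mSnd p) ∧
              (z + A p ∈ frontier Wd ↔ mSnd p = h (mFst p)))

/-- A (uniformly) `C²` domain of type `(α, β, L)` inside the model space. -/
def IsUnifC2Model {n : ℕ} (α β L : ℝ) (W : Set (Model n)) : Prop :=
  IsOpen W ∧ ∀ z ∈ frontier W,
    ∃ (A : Model n ≃ₗᵢ[ℝ] Model n) (h : Euc' n → ℝ),
      h 0 = 0 ∧ fderiv ℝ h 0 = 0 ∧ ContDiffOn ℝ 2 h (ball (0 : Euc' n) α) ∧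
        (∀ x' ∈ ball (0 : Euc' n) α,
          |h x'| ≤ L ∧ ‖fderiv ℝ h x'‖ ≤ L ∧ ‖fderiv ℝ (fderiv ℝ h) x'‖ ≤ L) ∧
        ∀ p : Model n, ‖mFst p‖ < α → |mSnd p - h (mFst p)| < β →
          ((z + A p ∈ W ↔ h (mFst p) < mSnd p) ∧
            (z + A p ∈ frontier W ↔ mSnd p = h (mFst p)))
namespace ZEaux

open MeasureTheory Metric Set Function
open scoped ENNReal NNReal

variable {n : ℕ}

local notation "κ" => (volume (closedBall (0 : Euc n) 1))

lemma kappa_pos : 0 < (volume (closedBall (0 : Euc n) 1)).toReal := by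
  refine ENNReal.toReal_pos ?_ measure_closedBall_lt_top.ne
  exact (measure_closedBall_pos _ _ one_pos).ne'

lemma vol_cb (x : Euc n) {r : ℝ} (hr : 0 ≤ r) :
    volume (closedBall x r)
      = ENNReal.ofReal (r ^ n) * volume (closedBall (0 : Euc n) 1) := by
  rw [MeasureTheory.Measure.addHaar_closedBall' volume x hr, finrank_euclideanSpace_fin]

lemma vol_cb' (x : Euc n) {r : ℝ} (hr : 0 ≤ r) :
    (volume (closedBall x r)).toReal
      = r ^ n * (volume (closedBall (0 : Euc n) 1)).toReal := by
  rw [vol_cb x hr, ENNReal.toReal_mul, ENNReal.toReal_ofReal (by positivity)]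

lemma avg_eq (g : Euc n → ℝ) (x : Euc n) (r : ℝ) :
    ⨍ y in closedBall x r, g y
      = (volume (closedBall x r)).toReal⁻¹ * ∫ y in closedBall x r, g y := by
  rw [setAverage_eq, smul_eq_mul, measureReal_def]

lemma meanOsc_nonneg (g : Euc n → ℝ) (x : Euc n) (r : ℝ) : 0 ≤ meanOsc g x r := by
  rw [meanOsc, avg_eq]
  exact mul_nonneg (by positivity) (integral_nonneg fun y => abs_nonneg _)

lemma meanOsc_zero {g : Euc n → ℝ} {x : Euc n} {r : ℝ}
    (h : ∀ y ∈ closedBall x r, g y = 0) : meanOsc g x r = 0 := by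
  have hA : ballAvg g x r = 0 := by
    rw [ballAvg, setAverage_eq, setIntegral_congr_fun measurableSet_closedBall
      (g := fun _ => (0:ℝ)) h, integral_zero, smul_zero]
  rw [meanOsc, setAverage_eq, setIntegral_congr_fun measurableSet_closedBall
    (g := fun _ => (0:ℝ)) (fun y hy => by rw [h y hy, hA]; simp), integral_zero, smul_zero]

lemma abs_ballAvg_le (g : Euc n → ℝ) (x : Euc n) (r : ℝ) :
    |ballAvg g x r| ≤ ⨍ y in closedBall x r, |g y| := by
  rw [ballAvg, avg_eq, avg_eq, abs_mul, abs_inv, abs_of_nonneg ENNReal.toReal_nonneg]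
  gcongr
  simpa [Real.norm_eq_abs] using
    norm_integral_le_integral_norm (μ := volume.restrict (closedBall x r)) g

lemma abs_avg_sub_le {g : Euc n → ℝ} {x : Euc n} {r : ℝ} (hr : 0 < r)
    (hg : IntegrableOn g (closedBall x r)) (c : ℝ) :
    |ballAvg g x r - c| ≤ ⨍ y in closedBall x r, |g y - c| := by
  have hμ0 : volume (closedBall x r) ≠ 0 := (measure_closedBall_pos _ _ hr).ne'
  have hμt : volume (closedBall x r) ≠ ⊤ := measure_closedBall_lt_top.ne
  have hν : (0:ℝ) < (volume (closedBall x r)).toReal := ENNReal.toReal_pos hμ0 hμt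
  have hconst : IntegrableOn (fun _ => c) (closedBall x r) (volume) :=
    integrableOn_const hμt
  have hsub : ∫ y in closedBall x r, (g y - c)
      = (∫ y in closedBall x r, g y) - (volume (closedBall x r)).toReal * c := by
    rw [integral_sub hg hconst, setIntegral_const, smul_eq_mul, measureReal_def]
  have h1 : |ballAvg g x r - c|
      = (volume (closedBall x r)).toReal⁻¹ * |∫ y in closedBall x r, (g y - c)| := by
    rw [ballAvg, avg_eq, hsub]
    have e : (volume (closedBall x r)).toReal⁻¹ * (∫ y in closedBall x r, g y) - c
        = (volume (closedBall x r)).toReal⁻¹ *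
          ((∫ y in closedBall x r, g y) - (volume (closedBall x r)).toReal * c) := by
      field_simp
    rw [e, abs_mul, abs_of_nonneg (inv_nonneg.2 hν.le)]
  rw [h1, avg_eq]
  gcongr
  simpa [Real.norm_eq_abs] using
    norm_integral_le_integral_norm (μ := volume.restrict (closedBall x r)) (fun y => g y - c)

lemma meanOsc_le_two {g : Euc n → ℝ} {x : Euc n} {r : ℝ} (hr : 0 < r)
    (hg : IntegrableOn g (closedBall x r)) (c : ℝ) :
    meanOsc g x r ≤ 2 * ⨍ y in closedBall x r, |g y - c| := by
  have hμ0 : volume (closedBall x r) ≠ 0 := (measure_closedBall_pos _ _ hr).ne'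
  have hμt : volume (closedBall x r) ≠ ⊤ := measure_closedBall_lt_top.ne
  have hν : (0:ℝ) < (volume (closedBall x r)).toReal := ENNReal.toReal_pos hμ0 hμt
  have hconst : ∀ a : ℝ, IntegrableOn (fun _ => a) (closedBall x r) (volume) :=
    fun a => integrableOn_const hμt
  have hgc : IntegrableOn (fun y => |g y - c|) (closedBall x r) := (hg.sub (hconst c)).abs
  have h2 : |ballAvg g x r - c| ≤ ⨍ y in closedBall x r, |g y - c| :=
    abs_avg_sub_le hr hg c
  have h1 : ∫ y in closedBall x r, |g y - ballAvg g x r|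
      ≤ (∫ y in closedBall x r, |g y - c|)
        + (volume (closedBall x r)).toReal * |ballAvg g x r - c| := by
    have : ∫ y in closedBall x r, (|g y - c| + |ballAvg g x r - c|)
        = (∫ y in closedBall x r, |g y - c|)
          + (volume (closedBall x r)).toReal * |ballAvg g x r - c| := by
      rw [integral_add hgc (hconst _), setIntegral_const, smul_eq_mul, measureReal_def]
    rw [← this]
    refine setIntegral_mono_on (hg.sub (hconst _)).abs (hgc.add (hconst _))
      measurableSet_closedBall (fun y _ => ?_)
    rw [show g y - ballAvg g x r = (g y - c) - (ballAvg g x r - c) from by ring]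
    exact abs_sub _ _
  calc meanOsc g x r
      = (volume (closedBall x r)).toReal⁻¹ * ∫ y in closedBall x r, |g y - ballAvg g x r| := by
        rw [meanOsc, avg_eq]
    _ ≤ (volume (closedBall x r)).toReal⁻¹ *
        ((∫ y in closedBall x r, |g y - c|)
          + (volume (closedBall x r)).toReal * |ballAvg g x r - c|) := by gcongr
    _ = (⨍ y in closedBall x r, |g y - c|) + |ballAvg g x r - c| := by
        rw [avg_eq, mul_add]
        congr 1
        field_simp
    _ ≤ 2 * ⨍ y in closedBall x r, |g y - c| := by linarith

end ZEaux
namespace ZEaux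

lemma avg_scale (G : Euc n → ℝ) (hG : ∀ y, 0 ≤ G y) (x : Euc n) {s t : ℝ}
    (hs : 0 < s) (hst : s ≤ t) (hint : IntegrableOn G (closedBall x t)) :
    ⨍ y in closedBall x s, G y ≤ (t/s)^n * ⨍ y in closedBall x t, G y := by
  have ht : 0 < t := hs.trans_le hst
  have hκ : 0 < (volume (closedBall (0 : Euc n) 1)).toReal := kappa_pos
  have hIst : ∫ y in closedBall x s, G y ≤ ∫ y in closedBall x t, G y :=
    setIntegral_mono_set hint (Filter.Eventually.of_forall fun y => hG y)
      ((closedBall_subset_closedBall hst).eventuallyLE)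
  have hI0 : 0 ≤ ∫ y in closedBall x t, G y := integral_nonneg fun y => hG y
  rw [avg_eq, avg_eq, vol_cb' x hs.le, vol_cb' x ht.le]
  have key : (t/s)^n * ((t ^ n * (volume (closedBall (0 : Euc n) 1)).toReal)⁻¹)
      = (s ^ n * (volume (closedBall (0 : Euc n) 1)).toReal)⁻¹ := by
    rw [div_pow]
    field_simp
  rw [← mul_assoc, key]
  gcongr

lemma ballAvg_diff (g : Euc n → ℝ) (x : Euc n) {s t : ℝ} (hs : 0 < s) (hst : s ≤ t)
    (hint : IntegrableOn g (closedBall x t)) :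
    |ballAvg g x s - ballAvg g x t| ≤ (t/s)^n * meanOsc g x t := by
  have h1 : |ballAvg g x s - ballAvg g x t|
      ≤ ⨍ y in closedBall x s, |g y - ballAvg g x t| :=
    abs_avg_sub_le hs (hint.mono_set (closedBall_subset_closedBall hst)) _
  refine h1.trans ?_
  exact avg_scale _ (fun y => abs_nonneg _) x hs hst
    (hint.sub (integrableOn_const measure_closedBall_lt_top.ne)).abs

lemma one_le_two_pow' (k : ℕ) : (1:ℝ) ≤ 2^k := by
  exact_mod_cast Nat.one_le_two_pow (n := k)

lemma chain (g : Euc n → ℝ) (x : Euc n) {R S : ℝ} (hR : 0 < R) (hS : 0 ≤ S)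
    (hg : IntegrableOn g (closedBall x R))
    (hosc : ∀ t, 0 < t → t ≤ R → meanOsc g x t ≤ S) :
    ∀ k : ℕ, |ballAvg g x (R / 2^k) - ballAvg g x R| ≤ k * (2^n * S) := by
  intro k
  induction k with
  | zero => simp
  | succ k ih =>
    have h2k : (0:ℝ) < 2^k := by positivity
    have hRk : 0 < R / 2^k := by positivity
    have hle : R / 2^k ≤ R := div_le_self hR.le (one_le_two_pow' k)
    have hstep : |ballAvg g x (R / 2^(k+1)) - ballAvg g x (R / 2^k)| ≤ 2^n * S := by
      have hd : (0:ℝ) < R / 2^(k+1) := by positivity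
      have hd2 : R / 2^(k+1) ≤ R / 2^k := by
        apply div_le_div_of_nonneg_left hR.le h2k
        rw [pow_succ]
        nlinarith
      have h := ballAvg_diff g x hd hd2 (hg.mono_set (closedBall_subset_closedBall hle))
      have hratio : (R / 2^k) / (R / 2^(k+1)) = 2 := by
        rw [pow_succ]
        field_simp
      rw [hratio] at h
      exact h.trans (mul_le_mul_of_nonneg_left (hosc _ hRk hle) (by positivity))
    calc |ballAvg g x (R / 2^(k+1)) - ballAvg g x R|
        ≤ |ballAvg g x (R / 2^(k+1)) - ballAvg g x (R / 2^k)|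
          + |ballAvg g x (R / 2^k) - ballAvg g x R| := abs_sub_le _ _ _
      _ ≤ 2^n * S + k * (2^n * S) := add_le_add hstep ih
      _ = (k+1 : ℕ) * (2^n * S) := by push_cast; ring

lemma avg_small (g : Euc n → ℝ) (x : Euc n) {R S r : ℝ} (hR : 0 < R) (hS : 0 ≤ S)
    (hg : IntegrableOn g (closedBall x R))
    (hosc : ∀ t, 0 < t → t ≤ R → meanOsc g x t ≤ S)
    (hr : 0 < r) (hrR : r ≤ R) :
    r * |ballAvg g x r| ≤ 2^(n+1) * R * S + R * |ballAvg g x R| := by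
  have hex : ∃ k : ℕ, R / 2^(k+1) < r := by
    obtain ⟨k, hk⟩ := pow_unbounded_of_one_lt (R / r) (y := (2:ℝ)) one_lt_two
    refine ⟨k, ?_⟩
    have h2k : (0:ℝ) < 2^k := by positivity
    rw [div_lt_iff₀ (by positivity)]
    rw [div_lt_iff₀ hr] at hk
    calc R < 2^k * r := hk
      _ ≤ r * 2^(k+1) := by rw [pow_succ]; nlinarith
  classical
  set k := Nat.find hex with hkdef
  have hk : R / 2^(k+1) < r := Nat.find_spec hex
  have h2k : (0:ℝ) < 2^k := by positivity
  have hrk : r ≤ R / 2^k := by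
    rcases Nat.eq_zero_or_pos k with h0 | hpos
    · rw [h0]; simpa using hrR
    · have hmin := Nat.find_min hex (m := k - 1) (by omega)
      have he : k - 1 + 1 = k := by omega
      rw [he] at hmin
      exact not_lt.1 hmin
  have hRk : 0 < R / 2^k := by positivity
  have hRkR : R / 2^k ≤ R := div_le_self hR.le (one_le_two_pow' k)
  have hjump : |ballAvg g x r - ballAvg g x (R / 2^k)| ≤ 2^n * S := by
    have h := ballAvg_diff g x hr hrk (hg.mono_set (closedBall_subset_closedBall hRkR))
    refine h.trans ?_
    have hb : (R / 2^k) / r ≤ 2 := by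
      rw [div_le_iff₀ hr]
      rw [div_lt_iff₀ (by positivity), pow_succ] at hk
      rw [div_le_iff₀ h2k]
      nlinarith
    have hb0 : (0:ℝ) ≤ (R / 2^k) / r := by positivity
    exact mul_le_mul (pow_le_pow_left₀ hb0 hb n) (hosc _ hRk hRkR)
      (meanOsc_nonneg g x _) (by positivity)
  have hchain := chain g x hR hS hg hosc k
  have havg : |ballAvg g x r| ≤ ((k:ℝ)+1) * (2^n * S) + |ballAvg g x R| := by
    have e : ballAvg g x r = (ballAvg g x r - ballAvg g x (R/2^k))
        + ((ballAvg g x (R/2^k) - ballAvg g x R) + ballAvg g x R) := by ring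
    calc |ballAvg g x r|
        ≤ |ballAvg g x r - ballAvg g x (R/2^k)|
          + (|ballAvg g x (R/2^k) - ballAvg g x R| + |ballAvg g x R|) := by
          conv_lhs => rw [e]
          exact (abs_add_le _ _).trans (add_le_add_right (abs_add_le _ _) _)
      _ ≤ 2^n * S + ((k:ℝ) * (2^n * S) + |ballAvg g x R|) :=
          add_le_add hjump (add_le_add_left hchain _)
      _ = ((k:ℝ)+1) * (2^n * S) + |ballAvg g x R| := by ring
  have hrk1 : r * ((k:ℝ)+1) ≤ 2 * R := by
    have h1 : (k:ℝ) + 1 ≤ 2^(k+1) := by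
      have h := Nat.lt_two_pow_self (n := k+1)
      have : ((k+1 : ℕ):ℝ) ≤ ((2^(k+1) : ℕ):ℝ) := by exact_mod_cast h.le
      push_cast at this
      linarith
    have h2 : r * ((k:ℝ)+1) ≤ (R / 2^k) * ((k:ℝ)+1) := by
      have hk0 : (0:ℝ) ≤ (k:ℝ) + 1 := by positivity
      nlinarith
    refine h2.trans ?_
    rw [div_mul_eq_mul_div, div_le_iff₀ h2k]
    have h3 : (2:ℝ)^(k+1) = 2 * 2^k := by rw [pow_succ]; ring
    nlinarith [hR.le]
  have hfin1 : (r * ((k:ℝ)+1)) * (2^n * S) ≤ (2*R) * (2^n * S) :=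
    mul_le_mul_of_nonneg_right hrk1 (by positivity)
  have hfin2 : r * |ballAvg g x R| ≤ R * |ballAvg g x R| :=
    mul_le_mul_of_nonneg_right hrR (abs_nonneg _)
  calc r * |ballAvg g x r| ≤ r * (((k:ℝ)+1) * (2^n * S) + |ballAvg g x R|) :=
        mul_le_mul_of_nonneg_left havg hr.le
    _ = (r * ((k:ℝ)+1)) * (2^n * S) + r * |ballAvg g x R| := by ring
    _ ≤ (2*R) * (2^n * S) + R * |ballAvg g x R| := add_le_add hfin1 hfin2
    _ = 2^(n+1) * R * S + R * |ballAvg g x R| := by ring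

end ZEaux
namespace ZEaux

lemma cutoff_lip {θ : ℝ → ℝ} (hθ : IsCutoff θ) :
    ∃ L : ℝ, 0 ≤ L ∧ ∀ a b : ℝ, |θ a - θ b| ≤ L * |a - b| := by
  have h1top : (1 : WithTop ℕ∞) ≤ ((⊤ : ℕ∞) : WithTop ℕ∞) := by
    exact_mod_cast (le_top : (1:ℕ∞) ≤ ⊤)
  obtain ⟨C, hC⟩ :=
    (hθ.1.continuous_deriv h1top).bounded_above_of_compact_support hθ.2.1.deriv
  refine ⟨max C 0, le_max_right _ _, fun a b => ?_⟩
  have hdiff : Differentiable ℝ θ := hθ.1.differentiable (by simp)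
  have hlip : LipschitzWith (Real.toNNReal C) θ := by
    apply lipschitzWith_of_nnnorm_deriv_le hdiff
    intro x
    have h1 : ‖deriv θ x‖ ≤ max C 0 := (hC x).trans (le_max_left _ _)
    rw [← NNReal.coe_le_coe, coe_nnnorm, Real.coe_toNNReal']
    exact h1
  have := hlip.dist_le_mul a b
  rw [Real.dist_eq, Real.dist_eq, Real.coe_toNNReal'] at this
  exact this

lemma infDist_frontier_le {Ω : Set (Euc n)} (hΩ : IsOpen Ω) {z y : Euc n}
    (hz : z ∈ Ω) (hy : y ∉ Ω) : infDist z (frontier Ω) ≤ dist z y := by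
  by_cases hfr : ∃ w ∈ segment ℝ z y, w ∈ frontier Ω
  · obtain ⟨w, hwseg, hwfr⟩ := hfr
    have hdist : dist z w + dist w y = dist z y := dist_add_dist_of_mem_segment hwseg
    have : infDist z (frontier Ω) ≤ dist z w := infDist_le_dist_of_mem hwfr
    linarith [dist_nonneg (x := w) (y := y)]
  · exfalso
    push_neg at hfr
    have hyc : y ∉ closure Ω := by
      intro hyc
      exact hfr y (right_mem_segment ℝ z y) ⟨hyc, by rwa [hΩ.interior_eq]⟩
    have hconn : IsPreconnected (segment ℝ z y) := (convex_segment z y).isPreconnected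
    have hsub : segment ℝ z y ⊆ Ω ∪ (closure Ω)ᶜ := by
      intro w hw
      by_cases hwΩ : w ∈ Ω
      · exact Or.inl hwΩ
      · by_cases hwc : w ∈ closure Ω
        · exact absurd ⟨hwc, by rwa [hΩ.interior_eq]⟩ (hfr w hw)
        · exact Or.inr hwc
    obtain ⟨w, -, hw1, hw2⟩ := hconn Ω (closure Ω)ᶜ hΩ isClosed_closure.isOpen_compl hsub
      ⟨z, left_mem_segment ℝ z y, hz⟩ ⟨y, right_mem_segment ℝ z y, hyc⟩
    exact hw2 (subset_closure hw1)

lemma l1_global {f : Euc n → ℝ} (hfm : AEStronglyMeasurable f (volume : Measure (Euc n)))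
    (hint : ∀ z : Euc n, IntegrableOn f (closedBall z 1))
    {M : ℝ} (hM0 : 0 ≤ M) (hM : ∀ z : Euc n, ∫ y in closedBall z 1, |f y| ≤ M)
    (x : Euc n) {r : ℝ} (hr : 0 ≤ r) (hintr : IntegrableOn f (closedBall x r)) :
    ∫ y in closedBall x r, |f y| ≤ (r + 1) ^ n * M := by
  set g : Euc n → ℝ≥0∞ := fun y => (‖f y‖₊ : ℝ≥0∞) with hgdef
  have hg : AEMeasurable g volume := hfm.enorm
  set h : Euc n → ℝ≥0∞ := (closedBall x r).indicator g with hhdef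
  have hh : AEMeasurable h volume := hg.indicator measurableSet_closedBall
  have hκ0 : volume (closedBall (0 : Euc n) 1) ≠ 0 := (measure_closedBall_pos _ _ one_pos).ne'
  have hκt : volume (closedBall (0 : Euc n) 1) ≠ ⊤ := measure_closedBall_lt_top.ne
  have hht : ∀ y, h y ≠ ⊤ := by
    intro y
    refine ((Set.indicator_le_self _ _ y).trans_lt ?_).ne
    exact ENNReal.coe_lt_top
  set F : Euc n → Euc n → ℝ≥0∞ :=
    fun y z => h y * (closedBall y 1).indicator (fun _ => (1:ℝ≥0∞)) z with hFdef
  have hsymm : ∀ y z, (closedBall y 1).indicator (fun _ => (1:ℝ≥0∞)) z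
      = ({q : Euc n × Euc n | dist q.1 q.2 ≤ 1}).indicator (fun _ => (1:ℝ≥0∞)) (y, z) := by
    intro y z
    simp only [Set.indicator_apply, mem_closedBall, mem_setOf_eq]
    rw [dist_comm z y]
  have hD : MeasurableSet {q : Euc n × Euc n | dist q.1 q.2 ≤ 1} :=
    (isClosed_le continuous_dist continuous_const).measurableSet
  have hFeq : Function.uncurry F = fun p : Euc n × Euc n =>
      h p.1 * ({q : Euc n × Euc n | dist q.1 q.2 ≤ 1}).indicator (fun _ => (1:ℝ≥0∞)) p := by
    funext p
    show F p.1 p.2 = _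
    rw [hFdef]
    simp only
    rw [hsymm p.1 p.2]
  have hswap : ∫⁻ y, ∫⁻ z, F y z ∂volume ∂volume = ∫⁻ z, ∫⁻ y, F y z ∂volume ∂volume := by
    apply lintegral_lintegral_swap
    rw [hFeq]
    exact (hh.comp_quasiMeasurePreserving MeasureTheory.Measure.quasiMeasurePreserving_fst).mul
      (measurable_one.indicator hD).aemeasurable
  have E2 : ∀ y, ∫⁻ z, F y z ∂volume = h y * volume (closedBall (0 : Euc n) 1) := by
    intro y
    rw [hFdef]
    simp only
    rw [lintegral_const_mul' (h y) _ (hht y), lintegral_indicator measurableSet_closedBall,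
      setLIntegral_one, Measure.addHaar_closedBall_center]
  have E1 : ∫⁻ y, ∫⁻ z, F y z ∂volume ∂volume
      = volume (closedBall (0 : Euc n) 1) * ∫⁻ y in closedBall x r, g y := by
    rw [lintegral_congr E2, lintegral_mul_const'' _ hh, hhdef,
      lintegral_indicator measurableSet_closedBall, mul_comm]
  have E3 : ∀ z, ∫⁻ y, F y z ∂volume
      ≤ (closedBall x (r+1)).indicator (fun _ => ENNReal.ofReal M) z := by
    intro z
    by_cases hz : z ∈ closedBall x (r+1)
    · rw [indicator_of_mem hz]
      have hFz : ∀ y, F y z = (closedBall z 1).indicator h y := by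
        intro y
        by_cases hy : y ∈ closedBall z 1
        · rw [indicator_of_mem hy, hFdef]
          simp only
          rw [indicator_of_mem (by rw [mem_closedBall, dist_comm]; exact hy), mul_one]
        · rw [indicator_of_notMem hy, hFdef]
          simp only
          rw [indicator_of_notMem (by rw [mem_closedBall, dist_comm]; exact hy), mul_zero]
      calc ∫⁻ y, F y z ∂volume = ∫⁻ y, (closedBall z 1).indicator h y ∂volume :=
            lintegral_congr hFz
        _ = ∫⁻ y in closedBall z 1, h y ∂volume := lintegral_indicator measurableSet_closedBall _
        _ ≤ ∫⁻ y in closedBall z 1, g y ∂volume :=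
            lintegral_mono fun y => Set.indicator_le_self _ _ y
        _ = ENNReal.ofReal (∫ y in closedBall z 1, ‖f y‖) :=
            (ofReal_integral_norm_eq_lintegral_enorm (hint z)).symm
        _ ≤ ENNReal.ofReal M := by
            apply ENNReal.ofReal_le_ofReal
            have : ∫ y in closedBall z 1, ‖f y‖ = ∫ y in closedBall z 1, |f y| := by
              simp [Real.norm_eq_abs]
            rw [this]
            exact hM z
    · rw [indicator_of_notMem hz]
      have hFz : ∀ y, F y z = 0 := by
        intro y
        by_cases hzy : z ∈ closedBall y 1
        · have hy : y ∉ closedBall x r := by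
            intro hy
            apply hz
            rw [mem_closedBall]
            calc dist z x ≤ dist z y + dist y x := dist_triangle z y x
              _ ≤ 1 + r := add_le_add (by rwa [mem_closedBall] at hzy) (by rwa [mem_closedBall] at hy)
              _ = r + 1 := by ring
          rw [hFdef]
          simp only
          rw [hhdef, indicator_of_notMem hy, zero_mul]
        · rw [hFdef]
          simp only
          rw [indicator_of_notMem hzy, mul_zero]
      refine le_of_eq ?_
      calc ∫⁻ y, F y z ∂volume = ∫⁻ (_ : Euc n), 0 ∂volume := lintegral_congr hFz
        _ = 0 := lintegral_zero
  have E4 : ∫⁻ z, (closedBall x (r+1)).indicator (fun _ => ENNReal.ofReal M) z ∂volume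
      = ENNReal.ofReal M * volume (closedBall x (r+1)) := by
    rw [lintegral_indicator measurableSet_closedBall, setLIntegral_const]
  have hbound : volume (closedBall (0 : Euc n) 1) * ∫⁻ y in closedBall x r, g y
      ≤ volume (closedBall (0 : Euc n) 1) * (ENNReal.ofReal ((r+1)^n) * ENNReal.ofReal M) := by
    calc volume (closedBall (0 : Euc n) 1) * ∫⁻ y in closedBall x r, g y
        = ∫⁻ y, ∫⁻ z, F y z ∂volume ∂volume := E1.symm
      _ = ∫⁻ z, ∫⁻ y, F y z ∂volume ∂volume := hswap
      _ ≤ ∫⁻ z, (closedBall x (r+1)).indicator (fun _ => ENNReal.ofReal M) z ∂volume :=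
          lintegral_mono E3
      _ = ENNReal.ofReal M * volume (closedBall x (r+1)) := E4
      _ = ENNReal.ofReal M * (ENNReal.ofReal ((r+1)^n) * volume (closedBall (0 : Euc n) 1)) := by
          rw [vol_cb x (by positivity : (0:ℝ) ≤ r + 1)]
      _ = volume (closedBall (0 : Euc n) 1) * (ENNReal.ofReal ((r+1)^n) * ENNReal.ofReal M) := by
          ring
  have hlin : ∫⁻ y in closedBall x r, g y ≤ ENNReal.ofReal ((r+1)^n) * ENNReal.ofReal M :=
    (ENNReal.mul_le_mul_iff_right hκ0 hκt).1 hbound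
  have hofr : ENNReal.ofReal (∫ y in closedBall x r, |f y|) ≤ ENNReal.ofReal ((r+1)^n * M) := by
    have e : ∫ y in closedBall x r, |f y| = ∫ y in closedBall x r, ‖f y‖ := by
      simp [Real.norm_eq_abs]
    rw [e, ofReal_integral_norm_eq_lintegral_enorm hintr, ENNReal.ofReal_mul (by positivity)]
    exact hlin
  exact (ENNReal.ofReal_le_ofReal_iff (by positivity)).1 hofr

end ZEaux
set_option maxHeartbeats 1000000

/-- Lemma 4.3: for `ρ` sufficiently small, the zero extension
`v₂^{ze}` of `v₂ = v − θ_ρ v` belongs to `bmo(ℝⁿ)` and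
`‖v₂^{ze}‖_{bmo(ℝⁿ)} ≤ (C/ρⁿ) ‖v‖_{bmo_∞^∞(Ω)}`, with `C` independent of `v` and `ρ`. -/
theorem zero_extension_bmo
    (n : ℕ) (hn : 2 ≤ n) (Ω : Set (Euc n)) (D : UnifC2Data n Ω)
    (θ : ℝ → ℝ) (hθ : IsCutoff θ) :
    ∃ ρbar : ℝ, 0 < ρbar ∧ ∃ C : ℝ, 0 < C ∧
      ∀ ρ : ℝ, 0 < ρ → ρ < ρbar →
        ∀ v : Euc n → ℝ, MemBmo v Ω →
          MemBmo (fun x => if x ∈ Ω then (1 - θ (sdist Ω x / ρ)) * v x else 0)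
            (Set.univ : Set (Euc n)) ∧
          bmoNorm (fun x => if x ∈ Ω then (1 - θ (sdist Ω x / ρ)) * v x else 0) Set.univ
            ≤ C / ρ ^ n * bmoNorm v Ω := by
  classical
  obtain ⟨Lθ, hLθ0, hLθ⟩ := ZEaux.cutoff_lip hθ
  set κ' : ℝ := (volume (closedBall (0 : Euc n) 1)).toReal with hκ'def
  have hκ' : 0 < κ' := ZEaux.kappa_pos
  set Cosc : ℝ := 2 + Lθ * 2^n + Lθ * 4^n / κ' + 2 * 5^n / κ' with hCoscdef
  have hCosc0 : 0 < Cosc := by positivity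
  refine ⟨1, one_pos, Cosc + 1, by positivity, ?_⟩
  intro ρ hρ hρ1 v hv
  have hΩo : IsOpen Ω := D.isOpen
  have hΩm : MeasurableSet Ω := hΩo.measurableSet
  set Sv := bmoSemi v Ω ⊤ with hSvdef
  set Mv := l1ul v Ω with hMvdef
  suffices H : ∀ f : Euc n → ℝ,
      (∀ z ∈ Ω, f z = (1 - θ (sdist Ω z / ρ)) * v z) → (∀ z ∉ Ω, f z = 0) →
      MemBmo f (Set.univ : Set (Euc n)) ∧
        bmoNorm f Set.univ ≤ (Cosc + 1) / ρ ^ n * bmoNorm v Ω by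
    exact H _ (fun z hz => if_pos hz) (fun z hz => if_neg hz)
  intro f hfΩ hfc
  have hρn : (0:ℝ) < ρ^n := by positivity
  have hρ1n : ρ^n ≤ 1 := pow_le_one₀ hρ.le hρ1.le
  have hSv_le : ∀ (x : Euc n) (r : ℝ), 0 < r → closedBall x r ⊆ Ω → meanOsc v x r ≤ Sv :=
    fun x r hr hsub => le_csSup hv.1.2 ⟨x, r, hr, ENNReal.ofReal_lt_top, hsub, rfl⟩
  have hSv0 : 0 ≤ Sv := Real.sSup_nonneg
    (by rintro a ⟨x, r, hr, -, -, rfl⟩; exact ZEaux.meanOsc_nonneg v x r)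
  have hMv_le : ∀ z : Euc n, ∫ y in closedBall z 1 ∩ Ω, |v y| ≤ Mv :=
    fun z => le_csSup hv.2.2 ⟨z, rfl⟩
  have hMv0 : 0 ≤ Mv := Real.sSup_nonneg
    (by rintro a ⟨z, rfl⟩; exact integral_nonneg fun y => abs_nonneg _)
  have hθ01 := hθ.2.2.1
  have hθone := hθ.2.2.2.1
  -- pointwise facts about f
  have hf_out : ∀ z, z ∉ Ω → f z = 0 := fun z hz => hfc z hz
  have hf_in : ∀ z ∈ Ω, f z = (1 - θ (infDist z (frontier Ω) / ρ)) * v z := by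
    intro z hz
    rw [hfΩ z hz, sdist, if_pos hz]
  have hf_near : ∀ z ∈ Ω, infDist z (frontier Ω) ≤ ρ → f z = 0 := by
    intro z hz hd
    rw [hf_in z hz, hθone _ (by
      rw [abs_div, abs_of_nonneg infDist_nonneg, abs_of_pos hρ]
      exact div_le_one_of_le₀ hd hρ.le)]
    ring
  have hf_bd : ∀ y, |f y| ≤ Ω.indicator (fun y => |v y|) y := by
    intro y
    by_cases hy : y ∈ Ω
    · rw [hf_in y hy, Set.indicator_of_mem hy, abs_mul]
      have h1 := hθ01 (infDist y (frontier Ω) / ρ)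
      have h2 : |1 - θ (infDist y (frontier Ω) / ρ)| ≤ 1 :=
        abs_le.2 ⟨by linarith [h1.2], by linarith [h1.1]⟩
      nlinarith [abs_nonneg (v y)]
    · rw [hf_out y hy, Set.indicator_of_notMem hy]
      simp
  -- measurability
  have hsd_meas : Measurable (sdist Ω) := by
    have e : sdist Ω = Ω.piecewise (fun x => infDist x (frontier Ω))
        (fun x => -infDist x (frontier Ω)) := by
      funext z
      by_cases hz : z ∈ Ω <;> simp [sdist, Set.piecewise, hz]
    rw [e]
    exact Measurable.piecewise hΩm (continuous_infDist_pt _).measurable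
      (continuous_infDist_pt _).neg.measurable
  have hφm : Measurable fun y : Euc n => 1 - θ (sdist Ω y / ρ) :=
    measurable_const.sub (hθ.1.continuous.measurable.comp (hsd_meas.div_const ρ))
  have hf_ind : f = Ω.indicator (fun y => (1 - θ (sdist Ω y / ρ)) * v y) := by
    funext z
    by_cases hz : z ∈ Ω
    · rw [hfΩ z hz, Set.indicator_of_mem hz]
    · rw [hfc z hz, Set.indicator_of_notMem hz]
  have hf_aesm : ∀ s : Set (Euc n), IntegrableOn v (s ∩ Ω) →
      AEStronglyMeasurable f (volume.restrict s) := by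
    intro s hsint
    rw [hf_ind, aestronglyMeasurable_indicator_iff hΩm, Measure.restrict_restrict hΩm]
    have hsint' : IntegrableOn v (Ω ∩ s) := by rwa [Set.inter_comm] at hsint
    exact hφm.aestronglyMeasurable.mul hsint'.aestronglyMeasurable
  have hdom : ∀ z : Euc n,
      Integrable (Ω.indicator (fun y => |v y|)) (volume.restrict (closedBall z 1)) := by
    intro z
    have hIv := hv.2.1 z
    refine (integrable_indicator_iff hΩm).2 ?_
    show Integrable _ ((volume.restrict (closedBall z 1)).restrict Ω)
    rw [Measure.restrict_restrict hΩm]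
    have hIv' : IntegrableOn v (Ω ∩ closedBall z 1) := by rwa [Set.inter_comm] at hIv
    exact hIv'.abs
  have hint1 : ∀ z : Euc n, IntegrableOn f (closedBall z 1) := by
    intro z
    refine Integrable.mono' (hdom z) (hf_aesm _ (hv.2.1 z))
      (Filter.Eventually.of_forall fun y => ?_)
    rw [Real.norm_eq_abs]
    exact hf_bd y
  have hintball : ∀ (z : Euc n) (R : ℝ), IntegrableOn f (closedBall z R) := by
    intro z R
    obtain ⟨t, ht⟩ := (isCompact_closedBall z R).elim_finite_subcover
      (fun c : Euc n => ball c 1) (fun c => isOpen_ball)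
      (fun y _ => mem_iUnion.2 ⟨y, mem_ball_self one_pos⟩)
    have h1 : IntegrableOn f (⋃ c ∈ t, ball c 1) :=
      integrableOn_finset_iUnion.2 fun c _ => (hint1 c).mono_set ball_subset_closedBall
    exact h1.mono_set ht
  have hf_glob : AEStronglyMeasurable f volume := by
    have e : (volume : Measure (Euc n)) = volume.restrict (⋃ k : ℕ, closedBall (0:Euc n) k) := by
      rw [iUnion_closedBall_nat, Measure.restrict_univ]
    rw [e]
    exact aestronglyMeasurable_iUnion_iff.2 fun k => (hintball 0 k).aestronglyMeasurable
  have hunit : ∀ z : Euc n, ∫ y in closedBall z 1, |f y| ≤ Mv := by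
    intro z
    have h1 : ∫ y in closedBall z 1, |f y| ≤ ∫ y in closedBall z 1, Ω.indicator (fun y => |v y|) y :=
      setIntegral_mono_on (hint1 z).abs (hdom z) measurableSet_closedBall fun y _ => hf_bd y
    have h2 : ∫ y in closedBall z 1, Ω.indicator (fun y => |v y|) y
        = ∫ y in closedBall z 1 ∩ Ω, |v y| := by
      rw [integral_indicator hΩm, Measure.restrict_restrict hΩm, Set.inter_comm]
    rw [h2] at h1
    exact h1.trans (hMv_le z)
  -- per-ball oscillation estimate
  have hosc : ∀ (x : Euc n) (r : ℝ), 0 < r → meanOsc f x r ≤ Cosc / ρ^n * (Sv + Mv) := by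
    intro x r hr
    have hRHS0 : 0 ≤ Cosc / ρ^n * (Sv + Mv) := by
      apply mul_nonneg (by positivity)
      linarith
    rcases le_or_gt r (ρ/4) with hr4 | hr4
    · by_cases hcontain : closedBall x (ρ/4) ⊆ Ω
      · -- interior case
        have hsubr : closedBall x r ⊆ Ω := (closedBall_subset_closedBall hr4).trans hcontain
        have hvR : IntegrableOn v (closedBall x (ρ/4)) := hv.1.1 x (ρ/4) hcontain
        have hvr : IntegrableOn v (closedBall x r) :=
          hvR.mono_set (closedBall_subset_closedBall hr4)
        have hfi : IntegrableOn f (closedBall x r) := hintball x r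
        have hR4 : (0:ℝ) < ρ/4 := by linarith
        set A := ballAvg v x r with hAdef
        set c := (1 - θ (infDist x (frontier Ω) / ρ)) * A with hcdef
        have h2 := ZEaux.meanOsc_le_two hr hfi c
        have hpt : ∀ y ∈ closedBall x r, |f y - c| ≤ |v y - A| + (Lθ * r / ρ) * |A| := by
          intro y hy
          have hyΩ : y ∈ Ω := hsubr hy
          rw [hf_in y hyΩ, hcdef]
          set φy := 1 - θ (infDist y (frontier Ω) / ρ) with hφydef
          set φx := 1 - θ (infDist x (frontier Ω) / ρ) with hφxdef
          have hby := hθ01 (infDist y (frontier Ω) / ρ)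
          have hφy : |φy| ≤ 1 := abs_le.2 ⟨by rw [hφydef]; linarith [hby.2],
            by rw [hφydef]; linarith [hby.1]⟩
          have hdd : |infDist x (frontier Ω) / ρ - infDist y (frontier Ω) / ρ| ≤ r / ρ := by
            rw [div_sub_div_same, abs_div, abs_of_pos hρ]
            gcongr
            have e1 : infDist x (frontier Ω) ≤ infDist y (frontier Ω) + dist x y :=
              infDist_le_infDist_add_dist
            have e2 : infDist y (frontier Ω) ≤ infDist x (frontier Ω) + dist y x :=
              infDist_le_infDist_add_dist
            have e3 : dist x y ≤ r := by rw [dist_comm]; rwa [mem_closedBall] at hy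
            have e4 : dist y x ≤ r := by rwa [mem_closedBall] at hy
            rw [abs_sub_le_iff]
            constructor <;> linarith
          have hφxy : |φy - φx| ≤ Lθ * (r/ρ) := by
            have e : φy - φx = θ (infDist x (frontier Ω) / ρ) - θ (infDist y (frontier Ω) / ρ) := by
              rw [hφydef, hφxdef]; ring
            rw [e]
            refine (hLθ _ _).trans ?_
            exact mul_le_mul_of_nonneg_left hdd hLθ0
          have e : φy * v y - φx * A = φy * (v y - A) + (φy - φx) * A := by ring
          rw [e]
          calc |φy * (v y - A) + (φy - φx) * A|
              ≤ |φy * (v y - A)| + |(φy - φx) * A| := abs_add_le _ _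
            _ = |φy| * |v y - A| + |φy - φx| * |A| := by rw [abs_mul, abs_mul]
            _ ≤ 1 * |v y - A| + (Lθ * (r/ρ)) * |A| :=
                add_le_add (mul_le_mul_of_nonneg_right hφy (abs_nonneg _))
                  (mul_le_mul_of_nonneg_right hφxy (abs_nonneg _))
            _ = |v y - A| + (Lθ * r / ρ) * |A| := by ring
        have hμt : volume (closedBall x r) ≠ ⊤ := measure_closedBall_lt_top.ne
        have hν : (0:ℝ) < (volume (closedBall x r)).toReal :=
          ENNReal.toReal_pos (measure_closedBall_pos _ _ hr).ne' hμt
        have hconst : ∀ a : ℝ, IntegrableOn (fun _ => a) (closedBall x r) (volume) :=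
          fun a => integrableOn_const hμt
        have hvAint : IntegrableOn (fun y => |v y - A|) (closedBall x r) (volume) :=
          (hvr.sub (hconst A)).abs
        have hfcint : IntegrableOn (fun y => |f y - c|) (closedBall x r) (volume) :=
          (hfi.sub (hconst c)).abs
        have hInt : ∫ y in closedBall x r, |f y - c|
            ≤ ∫ y in closedBall x r, (|v y - A| + (Lθ*r/ρ)*|A|) :=
          setIntegral_mono_on hfcint (hvAint.add (hconst _)) measurableSet_closedBall hpt
        have hsplit : ∫ y in closedBall x r, (|v y - A| + (Lθ*r/ρ)*|A|)
            = (∫ y in closedBall x r, |v y - A|)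
              + (volume (closedBall x r)).toReal * ((Lθ*r/ρ)*|A|) := by
          rw [integral_add hvAint (hconst _), setIntegral_const, smul_eq_mul, measureReal_def]
        have havgle : ⨍ y in closedBall x r, |f y - c| ≤ meanOsc v x r + (Lθ*r/ρ)*|A| := by
          rw [ZEaux.avg_eq, meanOsc, ZEaux.avg_eq]
          calc (volume (closedBall x r)).toReal⁻¹ * ∫ y in closedBall x r, |f y - c|
              ≤ (volume (closedBall x r)).toReal⁻¹ *
                ((∫ y in closedBall x r, |v y - A|)
                  + (volume (closedBall x r)).toReal * ((Lθ*r/ρ)*|A|)) :=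
                mul_le_mul_of_nonneg_left (hInt.trans_eq hsplit) (inv_nonneg.2 hν.le)
            _ = (volume (closedBall x r)).toReal⁻¹ * (∫ y in closedBall x r, |v y - A|)
                  + (Lθ*r/ρ)*|A| := by
                field_simp
        have hoscv : meanOsc v x r ≤ Sv := hSv_le x r hr hsubr
        have hoscall : ∀ t, 0 < t → t ≤ ρ/4 → meanOsc v x t ≤ Sv := fun t ht htR =>
          hSv_le x t ht ((closedBall_subset_closedBall htR).trans hcontain)
        have hsmall := ZEaux.avg_small v x hR4 hSv0 hvR hoscall hr hr4
        have hAR : |ballAvg v x (ρ/4)| ≤ Mv / ((ρ/4)^n * κ') := by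
          refine (ZEaux.abs_ballAvg_le v x (ρ/4)).trans ?_
          rw [ZEaux.avg_eq, ZEaux.vol_cb' x hR4.le, ← hκ'def]
          have hIB : ∫ y in closedBall x (ρ/4), |v y| ≤ Mv := by
            have hBsub : closedBall x (ρ/4) ⊆ closedBall x 1 ∩ Ω := fun y hy =>
              ⟨closedBall_subset_closedBall (by linarith) hy, hcontain hy⟩
            have h5 := setIntegral_mono_set (hv.2.1 x).abs
              (Filter.Eventually.of_forall fun y => abs_nonneg _) hBsub.eventuallyLE
            exact h5.trans (hMv_le x)
          rw [le_div_iff₀ (by positivity)]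
          have e9 : ((ρ/4)^n * κ')⁻¹ * (∫ y in closedBall x (ρ/4), |v y|) * ((ρ/4)^n * κ')
              = ∫ y in closedBall x (ρ/4), |v y| := by
            field_simp
          rw [e9]
          exact hIB
        have hLρ : (0:ℝ) ≤ Lθ / ρ := by positivity
        have k1 : (Lθ/ρ) * (r*|A|)
            ≤ (Lθ/ρ) * (2^(n+1)*(ρ/4)*Sv) + (Lθ/ρ) * ((ρ/4)*|ballAvg v x (ρ/4)|) := by
          have := mul_le_mul_of_nonneg_left hsmall hLρ
          rw [mul_add] at this
          exact this
        have k2 : (Lθ/ρ) * ((ρ/4)*|ballAvg v x (ρ/4)|)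
            ≤ (Lθ/ρ) * ((ρ/4)*(Mv/((ρ/4)^n*κ'))) := by
          apply mul_le_mul_of_nonneg_left _ hLρ
          exact mul_le_mul_of_nonneg_left hAR (by positivity)
        have k3 : (Lθ/ρ)*(2^(n+1)*(ρ/4)*Sv) = Lθ * 2^n * Sv / 2 := by
          field_simp
          ring
        have k4 : (Lθ/ρ)*((ρ/4)*(Mv/((ρ/4)^n*κ'))) = (Lθ * 4^n/(4*κ')) * (Mv / ρ^n) := by
          rw [div_pow]
          field_simp
        have e1 : (Lθ*r/ρ)*|A| = (Lθ/ρ)*(r*|A|) := by ring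
        have hmain : meanOsc f x r ≤ 2*Sv + Lθ*2^n*Sv + (Lθ*4^n/(2*κ'))*(Mv/ρ^n) := by
          rw [k3] at k1
          rw [k4] at k2
          rw [e1] at havgle
          have e2 : (Lθ*4^n/(2*κ'))*(Mv/ρ^n) = 2*((Lθ*4^n/(4*κ'))*(Mv/ρ^n)) := by
            field_simp
            ring
          linarith [h2, havgle, hoscv, k1, k2, e2]
        refine hmain.trans ?_
        have hb : Lθ*4^n/(2*κ') ≤ Lθ*4^n/κ' :=
          div_le_div_of_nonneg_left (by positivity) hκ' (by linarith)
        have hSvr : Sv ≤ Sv / ρ^n := by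
          rw [le_div_iff₀ hρn]
          nlinarith
        have hMvr0 : 0 ≤ Mv/ρ^n := div_nonneg hMv0 hρn.le
        have hSvr0 : 0 ≤ Sv/ρ^n := div_nonneg hSv0 hρn.le
        have ee : Cosc/ρ^n*(Sv+Mv) = Cosc*(Sv/ρ^n) + Cosc*(Mv/ρ^n) := by
          field_simp
        rw [ee]
        have c1 : 2+Lθ*2^n ≤ Cosc := by
          rw [hCoscdef]
          have : (0:ℝ) ≤ Lθ * 4^n / κ' + 2 * 5^n / κ' := by positivity
          linarith
        have c2 : Lθ*4^n/κ' ≤ Cosc := by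
          rw [hCoscdef]
          have : (0:ℝ) ≤ 2 + Lθ * 2^n + 2 * 5^n / κ' := by positivity
          linarith
        calc 2*Sv + Lθ*2^n*Sv + (Lθ*4^n/(2*κ'))*(Mv/ρ^n)
            ≤ (2+Lθ*2^n)*(Sv/ρ^n) + (Lθ*4^n/κ')*(Mv/ρ^n) := by
              have h6 : (2+Lθ*2^n)*Sv ≤ (2+Lθ*2^n)*(Sv/ρ^n) :=
                mul_le_mul_of_nonneg_left hSvr (by positivity)
              have h7 : (Lθ*4^n/(2*κ'))*(Mv/ρ^n) ≤ (Lθ*4^n/κ')*(Mv/ρ^n) :=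
                mul_le_mul_of_nonneg_right hb hMvr0
              nlinarith [h6, h7]
          _ ≤ Cosc*(Sv/ρ^n) + Cosc*(Mv/ρ^n) :=
              add_le_add (mul_le_mul_of_nonneg_right c1 hSvr0)
                (mul_le_mul_of_nonneg_right c2 hMvr0)
      · -- vanishing case
        have hvanish : ∀ z ∈ closedBall x r, f z = 0 := by
          intro z hz
          by_cases hzΩ : z ∈ Ω
          · refine hf_near z hzΩ ?_
            obtain ⟨y, hy1, hy2⟩ := not_subset.1 hcontain
            have h1 : infDist z (frontier Ω) ≤ dist z y :=
              ZEaux.infDist_frontier_le hΩo hzΩ hy2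
            have h2' : dist z y ≤ dist z x + dist x y := dist_triangle z x y
            have h3 : dist z x ≤ r := by rwa [mem_closedBall] at hz
            have h4 : dist x y ≤ ρ/4 := by rw [dist_comm]; rwa [mem_closedBall] at hy1
            linarith
          · exact hf_out z hzΩ
        rw [ZEaux.meanOsc_zero hvanish]
        exact hRHS0
    · -- large ball case
      have hfi := hintball x r
      have h2avg := ZEaux.meanOsc_le_two hr hfi 0
      have havg : (⨍ y in closedBall x r, |f y - 0|)
          = (volume (closedBall x r)).toReal⁻¹ * ∫ y in closedBall x r, |f y| := by
        rw [ZEaux.avg_eq]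
        simp only [sub_zero]
      have hl1 : ∫ y in closedBall x r, |f y| ≤ (r+1)^n * Mv :=
        ZEaux.l1_global hf_glob hint1 hMv0 hunit x hr.le hfi
      have hvol : (volume (closedBall x r)).toReal = r^n * κ' := ZEaux.vol_cb' x hr.le
      rw [havg, hvol] at h2avg
      have hbase : r + 1 ≤ (5/ρ) * r := by
        rw [div_mul_eq_mul_div, le_div_iff₀ hρ]
        nlinarith
      have hpow : (r+1)^n ≤ 5^n/ρ^n * r^n := by
        calc (r+1)^n ≤ ((5/ρ)*r)^n := pow_le_pow_left₀ (by positivity) hbase n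
          _ = (5/ρ)^n * r^n := mul_pow _ _ _
          _ = 5^n/ρ^n * r^n := by rw [div_pow]
      have hstep : meanOsc f x r ≤ 2 * ((r^n*κ')⁻¹ * ((r+1)^n * Mv)) := by
        refine h2avg.trans ?_
        gcongr
      refine hstep.trans ?_
      have hrn : (0:ℝ) < r^n := by positivity
      calc 2 * ((r^n*κ')⁻¹ * ((r+1)^n * Mv))
          ≤ 2 * ((r^n*κ')⁻¹ * ((5^n/ρ^n * r^n) * Mv)) := by
            gcongr
        _ = (2*5^n/κ')/ρ^n * Mv := by
            field_simp
        _ ≤ Cosc/ρ^n * (Sv+Mv) := by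
            have c3 : 2*5^n/κ' ≤ Cosc := by
              rw [hCoscdef]
              have : (0:ℝ) ≤ 2 + Lθ * 2^n + Lθ * 4^n / κ' := by positivity
              linarith
            have c4 : Mv ≤ Sv + Mv := by linarith
            have h8 : (2*5^n/κ')/ρ^n ≤ Cosc/ρ^n := by
              gcongr
            exact mul_le_mul h8 c4 hMv0 (by positivity)
  -- assembly
  have hRHS0 : 0 ≤ Cosc / ρ^n * (Sv + Mv) := by
    apply mul_nonneg (by positivity)
    linarith
  constructor
  · constructor
    · exact ⟨fun x r _ => hintball x r,
        ⟨Cosc / ρ^n * (Sv + Mv), by rintro a ⟨x, r, hr, -, -, rfl⟩; exact hosc x r hr⟩⟩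
    · constructor
      · intro x
        rw [Set.inter_univ]
        exact hint1 x
      · refine ⟨Mv, ?_⟩
        rintro a ⟨z, rfl⟩
        simp only
        rw [Set.inter_univ]
        exact hunit z
  · have h1 : bmoSemi f univ ⊤ ≤ Cosc/ρ^n*(Sv+Mv) :=
      Real.sSup_le (by rintro a ⟨x, r, hr, -, -, rfl⟩; exact hosc x r hr) hRHS0
    have h2 : l1ul f univ ≤ Mv := by
      apply Real.sSup_le ?_ hMv0
      rintro a ⟨z, rfl⟩
      simp only
      rw [Set.inter_univ]
      exact hunit z
    have h3 : Mv ≤ 1/ρ^n * (Sv+Mv) := by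
      rw [one_div, inv_mul_eq_div, le_div_iff₀ hρn]
      nlinarith
    have hnorm : bmoNorm v Ω = Sv + Mv := rfl
    calc bmoNorm f univ = bmoSemi f univ ⊤ + l1ul f univ := rfl
      _ ≤ Cosc/ρ^n*(Sv+Mv) + 1/ρ^n*(Sv+Mv) := add_le_add h1 (h2.trans h3)
      _ = (Cosc+1)/ρ^n * (Sv+Mv) := by ring
      _ = (Cosc+1)/ρ^n * bmoNorm v Ω := by rw [hnorm]
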